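/- arXiv:0909.5286 — 3 statements merged into one kernel-verified Lean document; each statement's English description precedes it below -/
import Mathlib

section
/- For every ε > 0 and every s > 0, the inverse function δ^ε of γ^ε is differentiable at s and its derivative satisfies s·(δ^ε)'(s) ≥ 1. -/
theorem stmt_3 (ε : ℝ) (hε : 0 < ε) (γ δ : ℝ → ℝ)
    (hγ : ∀ r : ℝ, γ r = if r ≤ 1/ε then Real.exp r else Real.exp (1/ε) * (1 + r - 1/ε))
    (hδ : ∀ r : ℝ, δ (γ r) = r) :
    ∀ s : ℝ, 0 < s → DifferentiableAt ℝ δ s ∧ 1 ≤ s * deriv δ s := by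
  intro s hs
  set a : ℝ := Real.exp (1/ε) with ha
  have ha0 : 0 < a := Real.exp_pos _
  set g : ℝ → ℝ := fun y => if y ≤ a then Real.log y else a⁻¹ * y + (1/ε - 1) with hg
  -- γ ∘ g = id on positives
  have hγg : ∀ y : ℝ, 0 < y → γ (g y) = y := by
    intro y hy
    by_cases h : y ≤ a
    · have hgy : g y = Real.log y := if_pos h
      have hlog : Real.log y ≤ 1/ε := by
        calc Real.log y ≤ Real.log a := Real.log_le_log hy h
        _ = 1/ε := Real.log_exp _
      rw [hgy, hγ, if_pos hlog, Real.exp_log hy]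
    · push_neg at h
      have hgy : g y = a⁻¹ * y + (1/ε - 1) := if_neg (not_le.mpr h)
      have h1 : (1:ℝ) < a⁻¹ * y := by
        rw [← div_eq_inv_mul]
        exact (one_lt_div ha0).mpr h
      have hr : ¬ (a⁻¹ * y + (1/ε - 1) ≤ 1/ε) := by
        rw [not_le]; linarith
      rw [hgy, hγ, if_neg hr]
      field_simp
      ring
  -- δ = g on positives
  have hδg : ∀ y ∈ Set.Ioi (0:ℝ), δ y = g y := by
    intro y hy
    conv_lhs => rw [← hγg y hy]
    rw [hδ]
  have hev : δ =ᶠ[nhds s] g :=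
    Filter.eventuallyEq_of_mem (Ioi_mem_nhds hs) hδg
  -- derivative of g
  have hlin : ∀ x : ℝ, HasDerivAt (fun y => a⁻¹ * y + (1/ε - 1)) a⁻¹ x := by
    intro x
    simpa using ((hasDerivAt_id x).const_mul a⁻¹).add_const (1/ε - 1)
  have hgd : HasDerivAt g (if s ≤ a then s⁻¹ else a⁻¹) s := by
    rcases lt_trichotomy s a with h | h | h
    · rw [if_pos h.le]
      refine (Real.hasDerivAt_log hs.ne').congr_of_eventuallyEq ?_
      filter_upwards [Iio_mem_nhds h] with y hy
      exact if_pos (le_of_lt hy)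
    · rw [if_pos h.le]
      rw [h]
      have h1 : HasDerivWithinAt g a⁻¹ (Set.Iic a) a :=
        (Real.hasDerivAt_log ha0.ne').hasDerivWithinAt.congr
          (fun y hy => if_pos hy) (if_pos le_rfl)
      have hga : Real.log a = a⁻¹ * a + (1/ε - 1) := by
        rw [inv_mul_cancel₀ ha0.ne', ha, Real.log_exp]; ring
      have h2 : HasDerivWithinAt g a⁻¹ (Set.Ici a) a := by
        refine (hlin a).hasDerivWithinAt.congr ?_ ?_
        · intro y hy
          by_cases hya : y ≤ a
          · have hya' : y = a := le_antisymm hya hy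
            subst hya'
            simp only [hg, if_pos le_rfl]
            exact hga
          · exact if_neg hya
        · simp only [hg, if_pos le_rfl]
          exact hga
      have := h1.union h2
      rw [Set.Iic_union_Ici] at this
      exact this.hasDerivAt (by simp)
    · rw [if_neg (not_le.mpr h)]
      refine (hlin s).congr_of_eventuallyEq ?_
      filter_upwards [Ioi_mem_nhds h] with y hy
      exact if_neg (not_le.mpr hy)
  have hδd : DifferentiableAt ℝ δ s :=
    hgd.differentiableAt.congr_of_eventuallyEq hev
  refine ⟨hδd, ?_⟩
  rw [hev.deriv_eq, hgd.deriv]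
  by_cases h : s ≤ a
  · rw [if_pos h, mul_inv_cancel₀ hs.ne']
  · rw [if_neg h, ← div_eq_mul_inv]
    push_neg at h
    exact le_of_lt ((one_lt_div ha0).mpr h)
end

section
/- Let (Ω, μ) be a measure space and let j : ℝ³ → [0,+∞] be convex and lower semicontinuous with j(0) = 0. Let (ε_k) be a sequence of positive numbers with ε_k → 0, and let (u_k) and u be square-integrable functions Ω → ℝ³ such that u_k converges to u weakly in L²(μ; ℝ³), i.e. ∫_Ω ⟨u_k(x), g(x)⟩ dμ(x) → ∫_Ω ⟨u(x), g(x)⟩ dμ(x) for every g ∈ L²(μ; ℝ³). Then ∫_Ω j(u(x)) dμ(x) ≤ liminf_{k→∞} ∫_Ω j^{ε_k}(u_k(x)) dμ(x), the integrals being Lebesgue integrals with values in [0,+∞]. -/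
set_option maxHeartbeats 1000000

open ENNReal MeasureTheory Filter Topology RealInnerProductSpace

local notation "E3" => EuclideanSpace ℝ (Fin 3)

/-- A lower semicontinuous `ℝ≥0∞`-valued function attains its minimum on a compact set. -/
lemma lsc_min_on_compact {K : Set E3} (hK : IsCompact K) (hne : K.Nonempty)
    (Φ : E3 → ℝ≥0∞) (h : LowerSemicontinuous Φ) : ∃ y₀ ∈ K, ∀ y ∈ K, Φ y₀ ≤ Φ y := by
  set m : ℝ≥0∞ := ⨅ y ∈ K, Φ y with hm
  have hmle : ∀ y ∈ K, m ≤ Φ y := fun y hy => biInf_le _ hy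
  by_cases hmtop : m = ∞
  · obtain ⟨y, hy⟩ := hne
    exact ⟨y, hy, fun y' hy' => le_trans le_top (by rw [← hmtop] at *; exact hmle y' hy')⟩
  have hsel : ∀ n : ℕ, ∃ y ∈ K, Φ y < m + ENNReal.ofReal (1 / (n + 1)) := by
    intro n
    by_contra hcon
    push_neg at hcon
    have : m + ENNReal.ofReal (1 / (n + 1)) ≤ m := le_iInf₂ fun y hy => hcon y hy
    have hlt : m < m + ENNReal.ofReal (1 / (n + 1)) := by
      refine ENNReal.lt_add_right hmtop ?_
      simp [ENNReal.ofReal_eq_zero]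
      positivity
    exact absurd this (not_le.mpr hlt)
  choose y hyK hylt using hsel
  obtain ⟨y₀, hy₀K, φ, hφ, hconv⟩ := hK.tendsto_subseq hyK
  refine ⟨y₀, hy₀K, fun y' hy' => ?_⟩
  refine le_trans ?_ (hmle y' hy')
  by_contra hlt
  push_neg at hlt
  obtain ⟨c, hmc, hcΦ⟩ := exists_between hlt
  have hev1 : ∀ᶠ n in atTop, c < Φ (y (φ n)) := hconv.eventually (h y₀ c hcΦ)
  have htend : Tendsto (fun n : ℕ => m + ENNReal.ofReal (1 / (n + 1))) atTop (𝓝 m) := by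
    have h0 : Tendsto (fun n : ℕ => ENNReal.ofReal (1 / ((n : ℝ) + 1))) atTop (𝓝 0) := by
      rw [show (0 : ℝ≥0∞) = ENNReal.ofReal 0 by simp]
      exact (ENNReal.continuous_ofReal.tendsto 0).comp tendsto_one_div_add_atTop_nhds_zero_nat
    simpa using (tendsto_const_nhds (x := m)).add h0
  have hev2 : ∀ᶠ n : ℕ in atTop, m + ENNReal.ofReal (1 / ((n : ℝ) + 1)) < c :=
    htend.eventually_lt_const hmc
  have hev2' : ∀ᶠ n : ℕ in atTop, m + ENNReal.ofReal (1 / ((φ n : ℝ) + 1)) < c :=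
    (hφ.tendsto_atTop).eventually hev2
  obtain ⟨n, hn1, hn2⟩ := (hev1.and hev2').exists
  exact absurd ((hn1.trans (hylt (φ n))).trans hn2) (lt_irrefl c)

noncomputable def Jeps (j : E3 → ℝ≥0∞) (ε : ℝ) (x : E3) : ℝ≥0∞ :=
  ⨅ y : E3, ENNReal.ofReal (‖x - y‖^2 / (2 * ε)) + j y

lemma Jeps_le (j : E3 → ℝ≥0∞) (ε : ℝ) (x y : E3) :
    Jeps j ε x ≤ ENNReal.ofReal (‖x - y‖^2 / (2 * ε)) + j y := iInf_le _ y

lemma Jeps_le_quad (j : E3 → ℝ≥0∞) (hj0 : j 0 = 0) (ε : ℝ) (x : E3) :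
    Jeps j ε x ≤ ENNReal.ofReal (‖x‖^2 / (2 * ε)) := by
  simpa [hj0] using Jeps_le j ε x 0

lemma Jeps_ne_top (j : E3 → ℝ≥0∞) (hj0 : j 0 = 0) (ε : ℝ) (x : E3) :
    Jeps j ε x ≠ ∞ :=
  ne_top_of_le_ne_top ENNReal.ofReal_ne_top (Jeps_le_quad j hj0 ε x)

lemma Jeps_zero (j : E3 → ℝ≥0∞) (hj0 : j 0 = 0) (ε : ℝ) :
    Jeps j ε 0 = 0 :=
  le_antisymm (by simpa using Jeps_le_quad j hj0 ε 0) zero_le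

lemma Jeps_anti (j : E3 → ℝ≥0∞) {ε₁ ε₂ : ℝ} (h1 : 0 < ε₁) (h12 : ε₁ ≤ ε₂) (x : E3) :
    Jeps j ε₂ x ≤ Jeps j ε₁ x := by
  refine iInf_mono fun y => ?_
  gcongr

lemma Jeps_le_j (j : E3 → ℝ≥0∞) (ε : ℝ) (x : E3) : Jeps j ε x ≤ j x := by
  simpa using Jeps_le j ε x x

lemma exists_prox (j : E3 → ℝ≥0∞) (hlsc : LowerSemicontinuous j) (hj0 : j 0 = 0)
    {δ : ℝ} (hδ : 0 < δ) (z₀ : E3) :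
    ∃ y₀ : E3, ∀ y : E3, ENNReal.ofReal (‖z₀ - y₀‖^2 / (2 * δ)) + j y₀ ≤
      ENNReal.ofReal (‖z₀ - y‖^2 / (2 * δ)) + j y := by
  set Φ : E3 → ℝ≥0∞ := fun y => ENNReal.ofReal (‖z₀ - y‖^2 / (2 * δ)) + j y with hΦ
  have hΦlsc : LowerSemicontinuous Φ := by
    apply LowerSemicontinuous.add _ hlsc
    exact (ENNReal.continuous_ofReal.comp (by fun_prop)).lowerSemicontinuous
  have hK : IsCompact (Metric.closedBall (0 : E3) (2 * ‖z₀‖ + 1)) :=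
    isCompact_closedBall _ _
  have h0K : (0 : E3) ∈ Metric.closedBall (0 : E3) (2 * ‖z₀‖ + 1) := by
    simp only [Metric.mem_closedBall, dist_self]
    positivity
  obtain ⟨y₀, hy₀K, hy₀⟩ := lsc_min_on_compact hK ⟨0, h0K⟩ Φ hΦlsc
  refine ⟨y₀, fun y => ?_⟩
  by_cases hyK : y ∈ Metric.closedBall (0 : E3) (2 * ‖z₀‖ + 1)
  · exact hy₀ y hyK
  · have hy₀0 : Φ y₀ ≤ Φ 0 := hy₀ 0 h0K
    have hΦ0 : Φ 0 = ENNReal.ofReal (‖z₀‖^2 / (2 * δ)) := by simp [hΦ, hj0]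
    have hnorm : ‖z₀‖ ≤ ‖z₀ - y‖ := by
      have h1 : 2 * ‖z₀‖ + 1 < ‖y‖ := by
        simpa [Metric.mem_closedBall, dist_eq_norm, not_le] using hyK
      have h2 : ‖y‖ - ‖z₀‖ ≤ ‖y - z₀‖ := norm_sub_norm_le _ _
      rw [norm_sub_rev] at h2
      linarith
    calc Φ y₀ ≤ Φ 0 := hy₀0
      _ ≤ ENNReal.ofReal (‖z₀ - y‖^2 / (2 * δ)) := by
          rw [hΦ0]
          apply ENNReal.ofReal_le_ofReal
          gcongr
      _ ≤ Φ y := le_add_right le_rfl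

/-- For each base point `z₀`, there is an affine minorant of the Moreau envelope whose value
at any `z` is close to the envelope when `z` is close to `z₀`. -/
lemma exists_minorant (j : E3 → ℝ≥0∞)
    (hconv : ∀ x y : E3, ∀ t : ℝ, 0 ≤ t → t ≤ 1 →
      j (t • x + (1 - t) • y) ≤ ENNReal.ofReal t * j x + ENNReal.ofReal (1 - t) * j y)
    (hlsc : LowerSemicontinuous j) (hj0 : j 0 = 0)
    {δ : ℝ} (hδ : 0 < δ) (z₀ : E3) :
    ∃ (b : E3) (c : ℝ),
      (∀ w : E3, ENNReal.ofReal (c + ⟪b, w⟫) ≤ Jeps j δ w) ∧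
      (∀ z : E3, (Jeps j δ z).toReal ≤
        c + ⟪b, z⟫ + 2 * ‖z - z₀‖ * ‖z₀‖ / δ + ‖z - z₀‖^2 / (2 * δ)) := by
  obtain ⟨y₀, hmin⟩ := exists_prox j hlsc hj0 hδ z₀
  have h2δ : (0:ℝ) < 2 * δ := by linarith
  have hΦ0 : ENNReal.ofReal (‖z₀ - y₀‖^2 / (2*δ)) + j y₀ ≤ ENNReal.ofReal (‖z₀‖^2 / (2*δ)) := by
    simpa [hj0] using hmin 0
  have hjfin : j y₀ ≠ ∞ :=
    ne_top_of_le_ne_top ENNReal.ofReal_ne_top (le_add_self.trans hΦ0)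
  set a : ℝ := (j y₀).toReal with ha_def
  have ha : j y₀ = ENNReal.ofReal a := (ENNReal.ofReal_toReal hjfin).symm
  have ha0 : 0 ≤ a := ENNReal.toReal_nonneg
  -- quadratic bound at the prox point
  have hquad : ‖z₀ - y₀‖^2 / (2*δ) + a ≤ ‖z₀‖^2 / (2*δ) := by
    have h := ENNReal.toReal_mono ENNReal.ofReal_ne_top hΦ0
    rw [ENNReal.toReal_add ENNReal.ofReal_ne_top hjfin, ENNReal.toReal_ofReal (by positivity),
      ENNReal.toReal_ofReal (by positivity)] at h
    exact h
  have hn0nz : ‖z₀ - y₀‖ ≤ ‖z₀‖ := by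
    have h1 : ‖z₀ - y₀‖^2 ≤ ‖z₀‖^2 := by
      have hd : ‖z₀ - y₀‖^2/(2*δ) ≤ ‖z₀‖^2/(2*δ) := by linarith
      exact (div_le_div_iff_of_pos_right h2δ).mp hd
    nlinarith [norm_nonneg (z₀ - y₀), norm_nonneg z₀]
  set s : E3 := δ⁻¹ • (z₀ - y₀) with hs_def
  have hs_norm : ‖s‖ = ‖z₀ - y₀‖ / δ := by
    rw [hs_def, norm_smul, Real.norm_eq_abs, abs_inv, abs_of_pos hδ, inv_mul_eq_div]
  -- subgradient inequality
  have hsub : ∀ y : E3, ENNReal.ofReal (a + ⟪s, y - y₀⟫) ≤ j y := by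
    intro y
    by_cases hjy : j y = ∞
    · simp [hjy]
    set cR : ℝ := (j y).toReal with hcR_def
    have hy : j y = ENNReal.ofReal cR := (ENNReal.ofReal_toReal hjy).symm
    rw [hy]
    apply ENNReal.ofReal_le_ofReal
    set v : E3 := y - y₀ with hv_def
    set w : E3 := z₀ - y₀ with hw_def
    have key : ∀ t : ℝ, 0 < t → t ≤ 1 → a + ⟪s, v⟫ ≤ cR + t * (‖v‖^2 / (2*δ)) := by
      intro t ht0 ht1
      have halg : t • y + (1 - t) • y₀ = y₀ + t • v := by
        rw [hv_def]; module
      have hz : z₀ - (y₀ + t • v) = w - t • v := by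
        rw [hw_def]; module
      have hconv_t := hconv y y₀ t ht0.le ht1
      rw [halg] at hconv_t
      have hmin_t := hmin (y₀ + t • v)
      rw [hz] at hmin_t
      have hcomb : ENNReal.ofReal (‖w‖^2 / (2*δ)) + ENNReal.ofReal a ≤
          ENNReal.ofReal (‖w - t • v‖^2 / (2*δ)) +
            (ENNReal.ofReal t * ENNReal.ofReal cR + ENNReal.ofReal (1-t) * ENNReal.ofReal a) := by
        rw [← ha, ← hy]
        exact hmin_t.trans (add_le_add le_rfl hconv_t)
      have hne : ENNReal.ofReal (‖w - t • v‖^2 / (2*δ)) +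
          (ENNReal.ofReal t * ENNReal.ofReal cR + ENNReal.ofReal (1-t) * ENNReal.ofReal a) ≠ ∞ := by
        refine ENNReal.add_ne_top.mpr ⟨ENNReal.ofReal_ne_top, ENNReal.add_ne_top.mpr
          ⟨ENNReal.mul_ne_top ENNReal.ofReal_ne_top ENNReal.ofReal_ne_top,
           ENNReal.mul_ne_top ENNReal.ofReal_ne_top ENNReal.ofReal_ne_top⟩⟩
      have hreal := ENNReal.toReal_mono hne hcomb
      have hcR0 : 0 ≤ cR := ENNReal.toReal_nonneg
      rw [ENNReal.toReal_add ENNReal.ofReal_ne_top ENNReal.ofReal_ne_top,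
        ENNReal.toReal_add ENNReal.ofReal_ne_top (by
          exact ENNReal.add_ne_top.mpr ⟨ENNReal.mul_ne_top ENNReal.ofReal_ne_top ENNReal.ofReal_ne_top,
            ENNReal.mul_ne_top ENNReal.ofReal_ne_top ENNReal.ofReal_ne_top⟩),
        ENNReal.toReal_add (ENNReal.mul_ne_top ENNReal.ofReal_ne_top ENNReal.ofReal_ne_top)
          (ENNReal.mul_ne_top ENNReal.ofReal_ne_top ENNReal.ofReal_ne_top),
        ENNReal.toReal_mul, ENNReal.toReal_mul,
        ENNReal.toReal_ofReal (by positivity : (0:ℝ) ≤ ‖w‖^2 / (2*δ)),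
        ENNReal.toReal_ofReal ha0,
        ENNReal.toReal_ofReal (by positivity : (0:ℝ) ≤ ‖w - t • v‖^2 / (2*δ)),
        ENNReal.toReal_ofReal ht0.le, ENNReal.toReal_ofReal hcR0,
        ENNReal.toReal_ofReal (by linarith : (0:ℝ) ≤ 1 - t)] at hreal
      -- hreal : ‖w‖^2/(2δ) + a ≤ ‖w - t•v‖^2/(2δ) + (t*cR + (1-t)*a)
      have hexp : ‖w - t • v‖^2 = ‖w‖^2 - 2*t*⟪w, v⟫ + t^2*‖v‖^2 := by
        rw [norm_sub_sq_real, real_inner_smul_right, norm_smul, Real.norm_eq_abs,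
          mul_pow, sq_abs]
        ring
      rw [hexp] at hreal
      have hsv : ⟪s, v⟫ = ⟪w, v⟫ / δ := by
        rw [hs_def, real_inner_smul_left, inv_mul_eq_div]
      rw [hsv]
      have hstep : t * (a + ⟪w, v⟫/δ) ≤ t * (cR + t * (‖v‖^2 / (2*δ))) := by
        have e1 : ‖w‖^2/(2*δ) - (‖w‖^2 - 2*t*⟪w, v⟫ + t^2*‖v‖^2)/(2*δ)
            = t*⟪w,v⟫/δ - t^2*‖v‖^2/(2*δ) := by field_simp; ring
        have e2 : t*(a + ⟪w,v⟫/δ) = t*a + t*⟪w,v⟫/δ := by ring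
        have e3 : t*(cR + t*(‖v‖^2/(2*δ))) = t*cR + t^2*‖v‖^2/(2*δ) := by ring
        rw [e2, e3]
        nlinarith [hreal]
      exact le_of_mul_le_mul_left hstep ht0
    -- take t → 0
    refine le_of_forall_pos_le_add fun ε hε => ?_
    set K : ℝ := ‖v‖^2 / (2*δ) with hK_def
    have hK0 : 0 ≤ K := by positivity
    have ht0 : 0 < min 1 (ε / (K + 1)) := by
      apply lt_min one_pos
      positivity
    have := key (min 1 (ε / (K + 1))) ht0 (min_le_left _ _)
    have hbound : min 1 (ε / (K + 1)) * K ≤ ε := by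
      have h1 : min 1 (ε / (K + 1)) ≤ ε / (K + 1) := min_le_right _ _
      have h2 : min 1 (ε / (K + 1)) * K ≤ (ε / (K + 1)) * K := by
        apply mul_le_mul_of_nonneg_right h1 hK0
      have h3 : (ε / (K + 1)) * K ≤ ε := by
        rw [div_mul_eq_mul_div, div_le_iff₀ (by linarith)]
        nlinarith
      linarith
    linarith
  -- the affine minorant
  set c : ℝ := a - ⟪s, y₀⟫ - δ * ‖s‖^2 / 2 with hc_def
  refine ⟨s, c, ?_, ?_⟩
  · intro w
    rw [Jeps]
    refine le_iInf fun y => ?_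
    have hreal : c + ⟪s, w⟫ ≤ ‖w - y‖^2 / (2*δ) + (a + ⟪s, y - y₀⟫) := by
      have hi1 : ⟪s, w⟫ - ⟪s, y⟫ = ⟪s, w - y⟫ := (inner_sub_right _ _ _).symm
      have hi2 : ⟪s, y - y₀⟫ = ⟪s, y⟫ - ⟪s, y₀⟫ := inner_sub_right _ _ _
      have hkey : ⟪s, w - y⟫ ≤ ‖w - y‖^2/(2*δ) + δ*‖s‖^2/2 := by
        have hb1 : ⟪s, w - y⟫ ≤ ‖s‖ * ‖w - y‖ := real_inner_le_norm _ _
        have hb2 : 2*δ*(‖s‖*‖w-y‖) ≤ ‖w-y‖^2 + δ^2*‖s‖^2 := by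
          nlinarith [sq_nonneg (‖w-y‖ - δ*‖s‖)]
        have hb3 : ‖s‖*‖w-y‖ ≤ (‖w-y‖^2 + δ^2*‖s‖^2)/(2*δ) := by
          rw [le_div_iff₀ h2δ]; linarith
        have hb4 : (‖w-y‖^2 + δ^2*‖s‖^2)/(2*δ) = ‖w-y‖^2/(2*δ) + δ*‖s‖^2/2 := by
          field_simp
        linarith
      rw [hc_def, hi2]
      linarith
    calc ENNReal.ofReal (c + ⟪s, w⟫)
        ≤ ENNReal.ofReal (‖w - y‖^2/(2*δ) + (a + ⟪s, y - y₀⟫)) := ENNReal.ofReal_le_ofReal hreal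
      _ ≤ ENNReal.ofReal (‖w - y‖^2/(2*δ)) + ENNReal.ofReal (a + ⟪s, y - y₀⟫) :=
          ENNReal.ofReal_add_le
      _ ≤ ENNReal.ofReal (‖w - y‖^2/(2*δ)) + j y := add_le_add le_rfl (hsub y)
  · intro z
    have h1 : Jeps j δ z ≤ ENNReal.ofReal (‖z - y₀‖^2/(2*δ) + a) := by
      refine (Jeps_le j δ z y₀).trans ?_
      rw [ha, ENNReal.ofReal_add (by positivity) ha0]
    have h2 : (Jeps j δ z).toReal ≤ ‖z - y₀‖^2/(2*δ) + a := by
      have := ENNReal.toReal_mono ENNReal.ofReal_ne_top h1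
      rwa [ENNReal.toReal_ofReal (by positivity)] at this
    refine h2.trans ?_
    -- purely real estimate
    have heq2 : (2*δ) * (c + ⟪s, z⟫) = 2*δ*a + ‖z₀ - y₀‖^2 + 2*⟪z₀ - y₀, z - z₀⟫ := by
      have hi : ⟪s, z⟫ - ⟪s, y₀⟫ = ⟪s, z - y₀⟫ := (inner_sub_right _ _ _).symm
      have hzy : z - y₀ = (z - z₀) + (z₀ - y₀) := by module
      have hsz : ⟪s, z - y₀⟫ = δ⁻¹ * ⟪z₀ - y₀, z - z₀⟫ + δ⁻¹ * ‖z₀ - y₀‖^2 := by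
        rw [hs_def, real_inner_smul_left, hzy, inner_add_right,
          real_inner_self_eq_norm_sq]
        ring
      have hs2 : ‖s‖^2 = ‖z₀ - y₀‖^2 / δ^2 := by
        rw [hs_norm]; field_simp
      rw [hc_def]
      have : c + ⟪s, z⟫ = a + ⟪s, z - y₀⟫ - δ*‖s‖^2/2 := by rw [hc_def]; linarith [hi]
      rw [this, hsz, hs2]
      field_simp
      ring
    have htri : ‖z - y₀‖ ≤ ‖z₀ - y₀‖ + ‖z - z₀‖ := by
      have : z - y₀ = (z - z₀) + (z₀ - y₀) := by module
      rw [this]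
      exact (norm_add_le _ _).trans (by linarith [add_comm ‖z - z₀‖ ‖z₀ - y₀‖])
    have htri2 : ‖z - y₀‖^2 ≤ (‖z₀ - y₀‖ + ‖z - z₀‖)^2 :=
      pow_le_pow_left₀ (norm_nonneg _) htri 2
    have hinner : -(‖z₀ - y₀‖ * ‖z - z₀‖) ≤ ⟪z₀ - y₀, z - z₀⟫ := by
      have := abs_real_inner_le_norm (z₀ - y₀) (z - z₀)
      have h' := neg_abs_le ⟪z₀ - y₀, z - z₀⟫
      linarith
    have hP : ‖z - y₀‖^2 + (2*δ)*a ≤ (2*δ)*(c + ⟪s, z⟫) + 4*‖z - z₀‖*‖z₀‖ + ‖z - z₀‖^2 := by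
      rw [heq2]
      nlinarith [htri2, hinner, hn0nz, norm_nonneg (z - z₀), norm_nonneg (z₀ - y₀),
        mul_nonneg (norm_nonneg (z - z₀)) (sub_nonneg.mpr hn0nz)]
    calc ‖z - y₀‖^2/(2*δ) + a = (‖z - y₀‖^2 + (2*δ)*a)/(2*δ) := by field_simp
      _ ≤ ((2*δ)*(c + ⟪s, z⟫) + 4*‖z - z₀‖*‖z₀‖ + ‖z - z₀‖^2)/(2*δ) := by
          gcongr
      _ = c + ⟪s, z⟫ + 2*‖z - z₀‖*‖z₀‖/δ + ‖z - z₀‖^2/(2*δ) := by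
          field_simp
          ring

/-- countable family of affine minorants whose sup is the Moreau envelope -/
lemma exists_minorant_seq (j : E3 → ℝ≥0∞)
    (hconv : ∀ x y : E3, ∀ t : ℝ, 0 ≤ t → t ≤ 1 →
      j (t • x + (1 - t) • y) ≤ ENNReal.ofReal t * j x + ENNReal.ofReal (1 - t) * j y)
    (hlsc : LowerSemicontinuous j) (hj0 : j 0 = 0)
    {δ : ℝ} (hδ : 0 < δ) :
    ∃ (bs : ℕ → E3) (cs : ℕ → ℝ),
      (∀ i, ∀ w : E3, ENNReal.ofReal (cs i + ⟪bs i, w⟫) ≤ Jeps j δ w) ∧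
      (∀ z : E3, Jeps j δ z = ⨆ i, ENNReal.ofReal (cs i + ⟪bs i, z⟫)) := by
  obtain ⟨d, hd⟩ := TopologicalSpace.exists_dense_seq E3
  have H := fun i => exists_minorant j hconv hlsc hj0 hδ (d i)
  choose bs cs hminor hest using H
  refine ⟨bs, cs, hminor, fun z => ?_⟩
  refine le_antisymm ?_ (iSup_le fun i => hminor i z)
  by_cases htop : (⨆ i, ENNReal.ofReal (cs i + ⟪bs i, z⟫)) = ∞
  · rw [htop]; exact le_top
  refine ENNReal.le_of_forall_pos_le_add fun ε hε _ => ?_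
  set C : ℝ := 2 * (‖z‖ + 1) / δ + 1 / (2 * δ) with hC
  have hC0 : 0 < C := by positivity
  obtain ⟨η, hη0, hη1, hηC⟩ : ∃ η : ℝ, 0 < η ∧ η ≤ 1 ∧ η * C ≤ ε := by
    refine ⟨min 1 (ε / C), lt_min one_pos (by positivity), min_le_left _ _, ?_⟩
    have h1 : min 1 ((ε:ℝ) / C) ≤ (ε:ℝ) / C := min_le_right _ _
    calc min 1 ((ε:ℝ) / C) * C ≤ ((ε:ℝ) / C) * C := by
          apply mul_le_mul_of_nonneg_right h1 hC0.le
      _ = ε := by field_simp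
  obtain ⟨i, hi⟩ := hd.exists_dist_lt z hη0
  have hdist : ‖z - d i‖ < η := by rwa [← dist_eq_norm]
  have hdn : ‖d i‖ ≤ ‖z‖ + 1 := by
    have h1 : ‖d i‖ - ‖z‖ ≤ ‖d i - z‖ := norm_sub_norm_le _ _
    rw [norm_sub_rev] at h1
    linarith
  have hkey : (Jeps j δ z).toReal ≤ cs i + ⟪bs i, z⟫ + (ε : ℝ) := by
    have h1 := hest i z
    have h2 : 2 * ‖z - d i‖ * ‖d i‖ / δ + ‖z - d i‖^2 / (2 * δ) ≤ η * C := by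
      have hnn : 0 ≤ ‖z - d i‖ := norm_nonneg _
      have hle1 : ‖z - d i‖ ≤ η := hdist.le
      have e1 : 2 * ‖z - d i‖ * ‖d i‖ / δ ≤ η * (2 * (‖z‖ + 1) / δ) := by
        rw [div_le_iff₀ hδ]
        have : η * (2 * (‖z‖ + 1) / δ) * δ = η * (2 * (‖z‖ + 1)) := by field_simp
        rw [this]
        nlinarith [norm_nonneg (d i)]
      have e2 : ‖z - d i‖^2 / (2 * δ) ≤ η * (1 / (2 * δ)) := by
        rw [div_le_iff₀ (by positivity : (0:ℝ) < 2*δ)]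
        have : η * (1 / (2 * δ)) * (2 * δ) = η := by field_simp
        rw [this]
        nlinarith
      rw [hC]
      linarith [e1, e2]
    have h2' : 2 * ‖z - d i‖ * ‖d i‖ / δ + ‖z - d i‖^2 / (2 * δ) ≤ (ε : ℝ) := h2.trans hηC
    linarith [h1, h2']
  have hfin := Jeps_ne_top j hj0 δ z
  calc Jeps j δ z = ENNReal.ofReal ((Jeps j δ z).toReal) := (ENNReal.ofReal_toReal hfin).symm
    _ ≤ ENNReal.ofReal (cs i + ⟪bs i, z⟫ + (ε:ℝ)) := ENNReal.ofReal_le_ofReal hkey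
    _ ≤ ENNReal.ofReal (cs i + ⟪bs i, z⟫) + ENNReal.ofReal (ε:ℝ) := ENNReal.ofReal_add_le
    _ ≤ (⨆ i, ENNReal.ofReal (cs i + ⟪bs i, z⟫)) + (ε:ℝ≥0∞) := by
        gcongr
        · exact le_iSup (fun i => ENNReal.ofReal (cs i + ⟪bs i, z⟫)) i
        · exact ENNReal.ofReal_coe_nnreal.le

/-- pointwise convergence of the Moreau envelope to `j` -/
lemma iSup_Jeps_eq (j : E3 → ℝ≥0∞) (hlsc : LowerSemicontinuous j) (hj0 : j 0 = 0) (z : E3) :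
    ⨆ m : ℕ, Jeps j (1 / ((m:ℝ) + 1)) z = j z := by
  refine le_antisymm (iSup_le fun m => Jeps_le_j j _ z) ?_
  by_contra hcon
  push_neg at hcon
  obtain ⟨c, hSc, hcj⟩ := exists_between hcon
  have hctop : c ≠ ∞ := fun h => not_top_lt (h ▸ hcj)
  have hsel : ∀ m : ℕ, ∃ y : E3,
      ENNReal.ofReal (‖z - y‖^2 / (2 * (1 / ((m:ℝ) + 1)))) + j y < c := by
    intro m
    have h1 : Jeps j (1 / ((m:ℝ) + 1)) z < c :=
      lt_of_le_of_lt (le_iSup (fun m : ℕ => Jeps j (1 / ((m:ℝ) + 1)) z) m) hSc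
    rw [Jeps, iInf_lt_iff] at h1
    exact h1
  choose y hy using hsel
  have hjy : ∀ m, j (y m) < c := fun m =>
    lt_of_le_of_lt (le_add_self.trans_eq rfl) (hy m)
  have hquad : ∀ m : ℕ, ‖z - y m‖^2 < 2 * (1 / ((m:ℝ) + 1)) * c.toReal := by
    intro m
    have h1 : ENNReal.ofReal (‖z - y m‖^2 / (2 * (1 / ((m:ℝ) + 1)))) < c :=
      lt_of_le_of_lt (le_add_right le_rfl) (hy m)
    have h2 : ‖z - y m‖^2 / (2 * (1 / ((m:ℝ) + 1))) < c.toReal := by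
      rw [← ENNReal.ofReal_lt_iff_lt_toReal (by positivity) hctop] at *
      exact h1
    have hpos : (0:ℝ) < 2 * (1 / ((m:ℝ) + 1)) := by positivity
    rw [div_lt_iff₀ hpos] at h2
    linarith [h2]
  have htends : Tendsto y atTop (𝓝 z) := by
    rw [tendsto_iff_dist_tendsto_zero]
    have hb : ∀ m : ℕ, dist (y m) z ≤ Real.sqrt (2 * c.toReal * (1 / ((m:ℝ) + 1))) := by
      intro m
      rw [dist_eq_norm, ← Real.sqrt_sq (norm_nonneg (y m - z))]
      apply Real.sqrt_le_sqrt
      rw [← norm_sub_rev z (y m)] at *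
      nlinarith [hquad m, norm_nonneg (z - y m)]
    have hb2 : Tendsto (fun m : ℕ => Real.sqrt (2 * c.toReal * (1 / ((m:ℝ) + 1)))) atTop (𝓝 0) := by
      have h1 : Tendsto (fun m : ℕ => 2 * c.toReal * (1 / ((m:ℝ) + 1))) atTop (𝓝 0) := by
        simpa using tendsto_one_div_add_atTop_nhds_zero_nat.const_mul (2 * c.toReal)
      have h2 := (Real.continuous_sqrt.tendsto' 0 0 Real.sqrt_zero).comp h1
      exact h2
    exact squeeze_zero (fun m => dist_nonneg) hb hb2
  have hev : ∀ᶠ m in atTop, c < j (y m) := htends.eventually (hlsc z c hcj)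
  obtain ⟨m, hm⟩ := hev.exists
  exact absurd (hm.trans (hjy m)) (lt_irrefl c)

lemma ofReal_sum_le {ι : Type*} (s : Finset ι) (f : ι → ℝ) :
    ENNReal.ofReal (∑ i ∈ s, f i) ≤ ∑ i ∈ s, ENNReal.ofReal (f i) := by
  classical
  induction s using Finset.induction_on with
  | empty => simp
  | insert _ _ hx ih =>
    rw [Finset.sum_insert hx, Finset.sum_insert hx]
    exact ENNReal.ofReal_add_le.trans (add_le_add le_rfl ih)

lemma ofReal_integral_le {Ω : Type*} [MeasurableSpace Ω] (μ : Measure Ω) (f : Ω → ℝ)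
    (hf : Integrable f μ) :
    ENNReal.ofReal (∫ x, f x ∂μ) ≤ ∫⁻ x, ENNReal.ofReal (f x) ∂μ := by
  calc ENNReal.ofReal (∫ x, f x ∂μ)
      ≤ ENNReal.ofReal (∫ x, max (f x) 0 ∂μ) :=
        ENNReal.ofReal_le_ofReal (integral_mono hf hf.pos_part fun x => le_max_left _ _)
    _ = ∫⁻ x, ENNReal.ofReal (max (f x) 0) ∂μ :=
        ofReal_integral_eq_lintegral_ofReal hf.pos_part (ae_of_all _ fun x => le_max_right _ _)
    _ = ∫⁻ x, ENNReal.ofReal (f x) ∂μ := by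
        refine lintegral_congr fun x => ?_
        rcases le_total (f x) 0 with h | h
        · rw [max_eq_right h, ENNReal.ofReal_zero, eq_comm, ENNReal.ofReal_eq_zero.mpr h]
        · rw [max_eq_left h]

theorem stmt_8 {Ω : Type*} [MeasurableSpace Ω] (μ : Measure Ω)
    (j : EuclideanSpace ℝ (Fin 3) → ℝ≥0∞)
    (hconv : ∀ x y : EuclideanSpace ℝ (Fin 3), ∀ t : ℝ, 0 ≤ t → t ≤ 1 →
      j (t • x + (1 - t) • y) ≤ ENNReal.ofReal t * j x + ENNReal.ofReal (1 - t) * j y)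
    (hlsc : LowerSemicontinuous j) (hj0 : j 0 = 0)
    (jeps : ℝ → EuclideanSpace ℝ (Fin 3) → ℝ≥0∞)
    (hjeps : ∀ ε : ℝ, ∀ x : EuclideanSpace ℝ (Fin 3),
      jeps ε x = ⨅ y : EuclideanSpace ℝ (Fin 3),
        (ENNReal.ofReal (‖x - y‖^2 / (2 * ε)) + j y))
    (εs : ℕ → ℝ) (hεpos : ∀ k, 0 < εs k) (hεlim : Tendsto εs atTop (nhds 0))
    (u : ℕ → Ω → EuclideanSpace ℝ (Fin 3)) (ulim : Ω → EuclideanSpace ℝ (Fin 3))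
    (hu : ∀ k, MemLp (u k) 2 μ) (hulim : MemLp ulim 2 μ)
    (hweak : ∀ g : Ω → EuclideanSpace ℝ (Fin 3), MemLp g 2 μ →
      Tendsto (fun k => ∫ x, (inner ℝ (u k x) (g x) : ℝ) ∂μ) atTop
        (nhds (∫ x, (inner ℝ (ulim x) (g x) : ℝ) ∂μ))) :
    (∫⁻ x, j (ulim x) ∂μ) ≤ liminf (fun k => ∫⁻ x, jeps (εs k) (u k x) ∂μ) atTop := by
  classical
  set L := liminf (fun k => ∫⁻ x, jeps (εs k) (u k x) ∂μ) atTop with hL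
  have hje : ∀ ε x, jeps ε x = Jeps j ε x := fun ε x => hjeps ε x
  -- measurable representative of ulim
  have hsm : AEStronglyMeasurable ulim μ := hulim.aestronglyMeasurable
  set ulim' : Ω → E3 := hsm.mk ulim with hulim'def
  have hmeas' : StronglyMeasurable ulim' := hsm.stronglyMeasurable_mk
  have haeq : ulim =ᵐ[μ] ulim' := hsm.ae_eq_mk
  have hmeasu : Measurable ulim' := hmeas'.measurable
  have hulim' : MemLp ulim' 2 μ := hulim.ae_eq haeq
  -- main step : for each fixed δ > 0 the lintegral of the envelope at ulim' is ≤ L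
  suffices Hδ : ∀ δ : ℝ, 0 < δ → ∫⁻ x, Jeps j δ (ulim' x) ∂μ ≤ L by
    have hmeasJ : ∀ m : ℕ, AEMeasurable (fun x => Jeps j (1 / ((m:ℝ) + 1)) (ulim' x)) μ := by
      intro m
      have hδm : (0:ℝ) < 1 / ((m:ℝ) + 1) := by positivity
      obtain ⟨bs, cs, hmin, hsup⟩ := exists_minorant_seq j hconv hlsc hj0 hδm
      have : (fun x => Jeps j (1 / ((m:ℝ) + 1)) (ulim' x)) =
          fun x => ⨆ i, ENNReal.ofReal (cs i + ⟪bs i, ulim' x⟫) := by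
        funext x; exact hsup (ulim' x)
      rw [this]
      refine (Measurable.iSup fun i => ?_).aemeasurable
      have hcont : Continuous fun w : E3 => cs i + ⟪bs i, w⟫ :=
        continuous_const.add (Continuous.inner continuous_const continuous_id)
      exact (ENNReal.continuous_ofReal.comp hcont).measurable.comp hmeasu
    calc ∫⁻ x, j (ulim x) ∂μ = ∫⁻ x, j (ulim' x) ∂μ :=
          lintegral_congr_ae (haeq.mono fun x hx => by simp only [hx])
      _ = ∫⁻ x, ⨆ m : ℕ, Jeps j (1 / ((m:ℝ) + 1)) (ulim' x) ∂μ :=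
          lintegral_congr fun x => (iSup_Jeps_eq j hlsc hj0 (ulim' x)).symm
      _ = ⨆ m : ℕ, ∫⁻ x, Jeps j (1 / ((m:ℝ) + 1)) (ulim' x) ∂μ := by
          refine lintegral_iSup' hmeasJ (ae_of_all _ fun x => ?_)
          intro m1 m2 h
          refine Jeps_anti j (by positivity) ?_ _
          apply one_div_le_one_div_of_le (by positivity)
          have : (m1:ℝ) ≤ (m2:ℝ) := Nat.cast_le.mpr h
          linarith
      _ ≤ L := iSup_le fun m => Hδ _ (by positivity)
  intro δ hδ
  obtain ⟨bs, cs, hmin, hsup⟩ := exists_minorant_seq j hconv hlsc hj0 hδ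
  have hcs : ∀ i, cs i ≤ 0 := by
    intro i
    have h1 := hmin i 0
    rw [Jeps_zero j hj0 δ, nonpos_iff_eq_zero] at h1
    simpa [ENNReal.ofReal_eq_zero] using h1
  have hcont : ∀ i, Continuous fun w : E3 => cs i + ⟪bs i, w⟫ := fun i =>
    continuous_const.add (Continuous.inner continuous_const continuous_id)
  have gmeas : ∀ i, Measurable fun x => ENNReal.ofReal (cs i + ⟪bs i, ulim' x⟫) := fun i =>
    (ENNReal.continuous_ofReal.comp (hcont i)).measurable.comp hmeasu
  have hgR : ∀ i, Measurable fun x => cs i + ⟪bs i, ulim' x⟫ := fun i =>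
    (hcont i).measurable.comp hmeasu
  set Mn : ℕ → Ω → ℝ≥0∞ :=
    fun n x => (Finset.range n).sup fun i => ENNReal.ofReal (cs i + ⟪bs i, ulim' x⟫) with hMn
  have hMnmeas : ∀ n, Measurable (Mn n) := by
    intro n
    induction n with
    | zero => simpa [hMn] using measurable_const
    | succ n ih =>
      have : Mn (n+1) = fun x => ENNReal.ofReal (cs n + ⟪bs n, ulim' x⟫) ⊔ Mn n x := by
        funext x
        rw [hMn]
        simp only [Finset.range_add_one, Finset.sup_insert]
      rw [this]
      exact (gmeas n).sup ih
  have hMnmono : Monotone Mn := fun m1 m2 h x =>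
    Finset.sup_mono (Finset.range_subset_range.mpr h)
  have hMnsup : ∀ x, ⨆ n, Mn n x = Jeps j δ (ulim' x) := by
    intro x
    rw [hsup (ulim' x)]
    refine le_antisymm (iSup_le fun n => Finset.sup_le fun i _ => le_iSup
      (fun i => ENNReal.ofReal (cs i + ⟪bs i, ulim' x⟫)) i) (iSup_le fun i => ?_)
    exact le_iSup_of_le (i+1) (Finset.le_sup
      (f := fun i => ENNReal.ofReal (cs i + ⟪bs i, ulim' x⟫)) (Finset.mem_range.mpr i.lt_succ_self))
  have key : ∀ n : ℕ, ∫⁻ x, Mn n x ∂μ ≤ L := by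
    intro n
    rcases Nat.eq_zero_or_pos n with rfl | hn
    · simp [hMn]

    -- partition of Ω by the least index attaining the finite max
    set P : ℕ → Set Ω := fun i => {x | ENNReal.ofReal (cs i + ⟪bs i, ulim' x⟫) = Mn n x ∧
      ∀ j' < i, ENNReal.ofReal (cs j' + ⟪bs j', ulim' x⟫) ≠ Mn n x} with hP
    have hPmeas : ∀ i, MeasurableSet (P i) := by
      intro i
      have h1 : MeasurableSet {x | ENNReal.ofReal (cs i + ⟪bs i, ulim' x⟫) = Mn n x} := by
        have := (measurableSet_le (gmeas i) (hMnmeas n)).inter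
          (measurableSet_le (hMnmeas n) (gmeas i))
        convert this using 1
        ext x
        simp only [Set.mem_setOf_eq, Set.mem_inter_iff]
        exact ⟨fun h => ⟨h.le, h.ge⟩, fun h => le_antisymm h.1 h.2⟩
      have h2 : MeasurableSet {x : Ω | ∀ j' < i,
          ENNReal.ofReal (cs j' + ⟪bs j', ulim' x⟫) ≠ Mn n x} := by
        have : {x : Ω | ∀ j' < i, ENNReal.ofReal (cs j' + ⟪bs j', ulim' x⟫) ≠ Mn n x} =
            ⋂ j' ∈ Set.Iio i, {x | ENNReal.ofReal (cs j' + ⟪bs j', ulim' x⟫) = Mn n x}ᶜ := by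
          ext x; simp [Set.mem_iInter]
        rw [this]
        refine MeasurableSet.biInter (Set.to_countable _) fun j' _ => ?_
        refine MeasurableSet.compl ?_
        have := (measurableSet_le (gmeas j') (hMnmeas n)).inter
          (measurableSet_le (hMnmeas n) (gmeas j'))
        convert this using 1
        ext x
        simp only [Set.mem_setOf_eq, Set.mem_inter_iff]
        exact ⟨fun h => ⟨h.le, h.ge⟩, fun h => le_antisymm h.1 h.2⟩
      exact h1.inter h2
    have hPdisj : ∀ i i', i ≠ i' → Disjoint (P i) (P i') := by
      intro i i' hne
      refine Set.disjoint_left.mpr fun x hx hx' => ?_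
      rcases lt_or_gt_of_ne hne with h | h
      · exact hx'.2 i h hx.1
      · exact hx.2 i' h hx'.1
    have hPcover : ∀ x, ∃ i ∈ Finset.range n, x ∈ P i := by
      intro x
      have hnonempty : (Finset.range n).Nonempty := Finset.nonempty_range_iff.mpr hn.ne'
      obtain ⟨i₀, hi₀mem, hi₀⟩ := Finset.exists_mem_eq_sup (Finset.range n) hnonempty
        (fun i => ENNReal.ofReal (cs i + ⟪bs i, ulim' x⟫))
      have hQ : ∃ i, ENNReal.ofReal (cs i + ⟪bs i, ulim' x⟫) = Mn n x := ⟨i₀, hi₀.symm⟩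
      refine ⟨Nat.find hQ, Finset.mem_range.mpr ?_, Nat.find_spec hQ, fun j' hj' => Nat.find_min hQ hj'⟩
      exact lt_of_le_of_lt (Nat.find_min' hQ hi₀.symm) (Finset.mem_range.mp hi₀mem)
    -- truncated sets of finite measure
    set A : ℕ → ℕ → Set Ω := fun i q => P i ∩ {x | 1/((q:ℝ)+1) ≤ cs i + ⟪bs i, ulim' x⟫} with hA
    have hAmeas : ∀ i q, MeasurableSet (A i q) := fun i q =>
      (hPmeas i).inter (measurableSet_le measurable_const (hgR i))
    have hAfin : ∀ i q, μ (A i q) < ∞ := by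
      intro i q
      have hq : (0:ℝ) < 1/((q:ℝ)+1) := by positivity
      by_cases hb : bs i = 0
      · have : A i q = ∅ := by
          refine Set.eq_empty_iff_forall_notMem.mpr fun x hx => ?_
          have := hx.2
          simp only [Set.mem_setOf_eq, hb, inner_zero_left, add_zero] at this
          linarith [hcs i]
        rw [this]; simp
      · have hbpos : 0 < ‖bs i‖ := norm_pos_iff.mpr hb
        set ε0 : NNReal := Real.toNNReal (1/((q:ℝ)+1) / ‖bs i‖) with hε0
        have hε0ne : ε0 ≠ 0 :=
          ne_of_gt (Real.toNNReal_pos.mpr (by positivity))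
        have hsub : A i q ⊆ {x | ε0 ≤ ‖ulim' x‖₊} := by
          intro x hx
          have h1 : 1/((q:ℝ)+1) ≤ cs i + ⟪bs i, ulim' x⟫ := hx.2
          have h2 : ⟪bs i, ulim' x⟫ ≤ ‖bs i‖ * ‖ulim' x‖ := real_inner_le_norm _ _
          have h3 : 1/((q:ℝ)+1) / ‖bs i‖ ≤ ‖ulim' x‖ := by
            rw [div_le_iff₀ hbpos]
            calc 1/((q:ℝ)+1) ≤ ⟪bs i, ulim' x⟫ := by linarith [hcs i]
              _ ≤ ‖bs i‖ * ‖ulim' x‖ := h2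
              _ = ‖ulim' x‖ * ‖bs i‖ := mul_comm _ _
          show ε0 ≤ ‖ulim' x‖₊
          rw [hε0, ← coe_nnnorm]
          exact Real.toNNReal_le_iff_le_coe.mpr (by rwa [coe_nnnorm])
        exact (measure_mono hsub).trans_lt
          (hulim'.meas_ge_lt_top two_ne_zero ENNReal.ofNat_ne_top hε0ne)
    -- the crucial estimate for fixed truncation level q
    have key_q : ∀ q : ℕ,
        ∑ i ∈ Finset.range n, ∫⁻ x in A i q, ENNReal.ofReal (cs i + ⟪bs i, ulim' x⟫) ∂μ ≤ L := by
      intro q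
      have hq : (0:ℝ) < 1/((q:ℝ)+1) := by positivity
      haveI : ∀ i, IsFiniteMeasure (μ.restrict (A i q)) := fun i =>
        ⟨by rw [Measure.restrict_apply_univ]; exact hAfin i q⟩
      set g : Ω → E3 := fun x => ∑ i ∈ Finset.range n, (A i q).indicator (fun _ => bs i) x with hg
      have hgmem : MemLp g 2 μ := memLp_finset_sum _ fun i _ =>
        memLp_indicator_const 2 (hAmeas i q) (bs i) (Or.inr (hAfin i q).ne)
      have hIv : ∀ (v : Ω → E3), MemLp v 2 μ → ∀ i,
          Integrable (fun x => (⟪v x, bs i⟫ : ℝ)) (μ.restrict (A i q)) := by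
        intro v hv i
        have h1 : MemLp v 1 (μ.restrict (A i q)) :=
          (hv.restrict _).mono_exponent (by norm_num)
        exact (memLp_one_iff_integrable.mp h1).inner_const (bs i)
      have hrepr : ∀ (v : Ω → E3), MemLp v 2 μ →
          ∫ x, (⟪v x, g x⟫ : ℝ) ∂μ = ∑ i ∈ Finset.range n, ∫ x in A i q, (⟪v x, bs i⟫ : ℝ) ∂μ := by
        intro v hv
        have hptw : ∀ x, (⟪v x, g x⟫ : ℝ) =
            ∑ i ∈ Finset.range n, (A i q).indicator (fun y => (⟪v y, bs i⟫ : ℝ)) x := by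
          intro x
          rw [hg]
          simp only
          rw [inner_sum]
          refine Finset.sum_congr rfl fun i _ => ?_
          by_cases hx : x ∈ A i q
          · simp [Set.indicator_of_mem hx]
          · simp [Set.indicator_of_notMem hx]
        calc ∫ x, (⟪v x, g x⟫ : ℝ) ∂μ
            = ∫ x, ∑ i ∈ Finset.range n, (A i q).indicator (fun y => (⟪v y, bs i⟫ : ℝ)) x ∂μ := by
              exact integral_congr_ae (ae_of_all _ hptw)
          _ = ∑ i ∈ Finset.range n, ∫ x, (A i q).indicator (fun y => (⟪v y, bs i⟫ : ℝ)) x ∂μ :=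
              integral_finset_sum _ fun i _ =>
                IntegrableOn.integrable_indicator (hIv v hv i) (hAmeas i q)
          _ = ∑ i ∈ Finset.range n, ∫ x in A i q, (⟪v x, bs i⟫ : ℝ) ∂μ :=
              Finset.sum_congr rfl fun i _ => integral_indicator (hAmeas i q)
      set C0 : ℝ := ∑ i ∈ Finset.range n, (μ (A i q)).toReal * cs i with hC0
      set T : (Ω → E3) → ℝ :=
        fun v => ∑ i ∈ Finset.range n, ∫ x in A i q, (cs i + ⟪v x, bs i⟫ : ℝ) ∂μ with hT
      have hTsplit : ∀ (v : Ω → E3), MemLp v 2 μ → T v = C0 + ∫ x, (⟪v x, g x⟫ : ℝ) ∂μ := by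
        intro v hv
        rw [hT, hC0, hrepr v hv, ← Finset.sum_add_distrib]
        refine Finset.sum_congr rfl fun i _ => ?_
        rw [integral_add (integrable_const _) (hIv v hv i), setIntegral_const, smul_eq_mul, measureReal_def]
      have htendsto : Tendsto (fun k => T (u k)) atTop (𝓝 (T ulim)) := by
        have h1 := (hweak g hgmem).const_add C0
        rw [← hTsplit ulim hulim] at h1
        exact h1.congr fun k => (hTsplit (u k) (hu k)).symm
      -- sum of restricted measures is ≤ μ
      have hmeasle : (∑ i ∈ Finset.range n, μ.restrict (A i q)) ≤ μ := by
        refine Measure.le_iff.mpr fun t ht => ?_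
        rw [Measure.finset_sum_apply]
        have heq : ∀ i ∈ Finset.range n, (μ.restrict (A i q)) t = μ (t ∩ A i q) := fun i _ =>
          Measure.restrict_apply ht
        rw [Finset.sum_congr rfl heq]
        have hd : Set.PairwiseDisjoint ↑(Finset.range n) (fun i => t ∩ A i q) := by
          intro i _ i' _ hne
          exact Set.disjoint_left.mpr fun x hx hx' =>
            Set.disjoint_left.mp (hPdisj i i' hne) hx.2.1 hx'.2.1
        rw [← measure_biUnion_finset hd fun i _ => ht.inter (hAmeas i q)]
        exact measure_mono (Set.iUnion₂_subset fun i _ => Set.inter_subset_left)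
      have hbound : ∀ᶠ k in atTop,
          ENNReal.ofReal (T (u k)) ≤ ∫⁻ x, jeps (εs k) (u k x) ∂μ := by
        filter_upwards [hεlim.eventually (gt_mem_nhds hδ)] with k hkδ
        calc ENNReal.ofReal (T (u k))
            ≤ ∑ i ∈ Finset.range n,
              ENNReal.ofReal (∫ x in A i q, (cs i + ⟪u k x, bs i⟫ : ℝ) ∂μ) := by
              rw [hT]; exact ofReal_sum_le _ _
          _ ≤ ∑ i ∈ Finset.range n,
              ∫⁻ x in A i q, ENNReal.ofReal (cs i + ⟪u k x, bs i⟫) ∂μ :=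
              Finset.sum_le_sum fun i _ => ofReal_integral_le _ _
                ((integrable_const _).add (hIv (u k) (hu k) i))
          _ ≤ ∑ i ∈ Finset.range n, ∫⁻ x in A i q, Jeps j δ (u k x) ∂μ := by
              refine Finset.sum_le_sum fun i _ => lintegral_mono fun x => ?_
              rw [real_inner_comm]
              exact hmin i (u k x)
          _ = ∫⁻ x, Jeps j δ (u k x) ∂(∑ i ∈ Finset.range n, μ.restrict (A i q)) :=
              (lintegral_finset_sum_measure _ _ _).symm
          _ ≤ ∫⁻ x, Jeps j δ (u k x) ∂μ := lintegral_mono' hmeasle le_rfl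
          _ ≤ ∫⁻ x, Jeps j (εs k) (u k x) ∂μ :=
              lintegral_mono fun x => Jeps_anti j (hεpos k) hkδ.le _
          _ = ∫⁻ x, jeps (εs k) (u k x) ∂μ := lintegral_congr fun x => (hje _ _).symm
      have hL1 : ENNReal.ofReal (T ulim) ≤ L := by
        have hlim : Tendsto (fun k => ENNReal.ofReal (T (u k))) atTop
            (𝓝 (ENNReal.ofReal (T ulim))) :=
          (ENNReal.continuous_ofReal.tendsto _).comp htendsto
        rw [hL, ← hlim.liminf_eq]
        exact liminf_le_liminf hbound
      -- identify ofReal (T ulim) with the target sum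
      have hfinal : ∑ i ∈ Finset.range n,
          ∫⁻ x in A i q, ENNReal.ofReal (cs i + ⟪bs i, ulim' x⟫) ∂μ = ENNReal.ofReal (T ulim) := by
        have hswap : ∀ i, ∫ x in A i q, (cs i + ⟪ulim x, bs i⟫ : ℝ) ∂μ =
            ∫ x in A i q, (cs i + ⟪ulim' x, bs i⟫ : ℝ) ∂μ :=
          fun i => integral_congr_ae (ae_restrict_of_ae (haeq.mono fun x hx => by simp only [hx]))
        have hnn : ∀ i, 0 ≤ᵐ[μ.restrict (A i q)] fun x => (cs i + ⟪ulim' x, bs i⟫ : ℝ) := by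
          intro i
          filter_upwards [ae_restrict_mem (hAmeas i q)] with x hx
          have h1 : 1/((q:ℝ)+1) ≤ cs i + ⟪bs i, ulim' x⟫ := hx.2
          rw [real_inner_comm] at h1
          show (0:ℝ) ≤ cs i + ⟪ulim' x, bs i⟫
          linarith [hq]
        have hint : ∀ i, Integrable (fun x => (cs i + ⟪ulim' x, bs i⟫ : ℝ)) (μ.restrict (A i q)) :=
          fun i => (integrable_const _).add (hIv ulim' hulim' i)
        have hTeq : T ulim = ∑ i ∈ Finset.range n,
            ∫ x in A i q, (cs i + ⟪ulim' x, bs i⟫ : ℝ) ∂μ := by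
          rw [hT]; exact Finset.sum_congr rfl fun i _ => hswap i
        rw [hTeq, ENNReal.ofReal_sum_of_nonneg fun i _ => integral_nonneg_of_ae (hnn i)]
        refine Finset.sum_congr rfl fun i _ => ?_
        rw [ofReal_integral_eq_lintegral_ofReal (hint i) (hnn i)]
        exact lintegral_congr fun x => by rw [real_inner_comm]
      rw [hfinal]
      exact hL1
    -- decompose the integral of the max along the partition and truncation
    have hcoverU : ⋃ i ∈ Finset.range n, P i = Set.univ := by
      refine Set.eq_univ_of_forall fun x => ?_
      obtain ⟨i, hi, hx⟩ := hPcover x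
      exact Set.mem_biUnion hi hx
    have key1 : ∫⁻ x, Mn n x ∂μ =
        ∑ i ∈ Finset.range n, ∫⁻ x in P i, ENNReal.ofReal (cs i + ⟪bs i, ulim' x⟫) ∂μ := by
      have h0 : ∫⁻ x, Mn n x ∂μ = ∫⁻ x in ⋃ i ∈ Finset.range n, P i, Mn n x ∂μ := by
        rw [hcoverU, Measure.restrict_univ]
      rw [h0, lintegral_biUnion_finset ?hd (fun i _ => hPmeas i)]
      · refine Finset.sum_congr rfl fun i _ => ?_
        refine setLIntegral_congr_fun (hPmeas i) (fun x hx => hx.1.symm)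
      · intro i hi i' hi' hne
        exact hPdisj i i' hne
    have key2 : ∀ i ∈ Finset.range n, ∫⁻ x in P i, ENNReal.ofReal (cs i + ⟪bs i, ulim' x⟫) ∂μ =
        ⨆ q : ℕ, ∫⁻ x in A i q, ENNReal.ofReal (cs i + ⟪bs i, ulim' x⟫) ∂μ := by
      intro i _
      have hPA : ∀ q, A i q ⊆ P i := fun q => Set.inter_subset_left
      have hAq : ∀ q q', q ≤ q' → A i q ⊆ A i q' := by
        intro q q' hqq
        refine Set.inter_subset_inter_right _ fun x hx => ?_
        have h1 : 1/((q':ℝ)+1) ≤ 1/((q:ℝ)+1) := by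
          apply one_div_le_one_div_of_le (by positivity)
          have : (q:ℝ) ≤ (q':ℝ) := Nat.cast_le.mpr hqq
          linarith
        exact le_trans h1 hx
      rw [← lintegral_indicator (hPmeas i) _]
      have hrw : ∀ q, ∫⁻ x in A i q, ENNReal.ofReal (cs i + ⟪bs i, ulim' x⟫) ∂μ =
          ∫⁻ x, (A i q).indicator (fun x => ENNReal.ofReal (cs i + ⟪bs i, ulim' x⟫)) x ∂μ :=
        fun q => (lintegral_indicator (hAmeas i q) _).symm
      rw [funext hrw] -- rewrite under the iSup? maybe need simp_rw
      rw [← lintegral_iSup]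
      · refine lintegral_congr fun x => ?_
        by_cases hxP : x ∈ P i
        · by_cases hpos : 0 < cs i + ⟪bs i, ulim' x⟫
          · obtain ⟨q, hq⟩ := exists_nat_one_div_lt hpos
            refine le_antisymm (le_iSup_of_le q ?_)
              (iSup_le fun q' =>
                Set.indicator_le_indicator_of_subset (hPA q') (fun _ => zero_le) x)
            have hxA : x ∈ A i q := Set.mem_inter hxP hq.le
            rw [Set.indicator_of_mem hxP, Set.indicator_of_mem hxA]
          · push_neg at hpos
            have h0 : ENNReal.ofReal (cs i + ⟪bs i, ulim' x⟫) = 0 :=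
              ENNReal.ofReal_eq_zero.mpr hpos
            rw [Set.indicator_of_mem hxP, h0]
            refine Eq.symm (le_antisymm (iSup_le fun q' => ?_) zero_le)
            by_cases hxA : x ∈ A i q'
            · rw [Set.indicator_of_mem hxA, h0]
            · rw [Set.indicator_of_notMem hxA]
        · rw [Set.indicator_of_notMem hxP]
          refine Eq.symm (le_antisymm (iSup_le fun q' => ?_) zero_le)
          rw [Set.indicator_of_notMem (fun hxA => hxP (hPA q' hxA))]
      · exact fun q => (gmeas i).indicator (hAmeas i q)
      · intro q q' hqq x
        exact Set.indicator_le_indicator_of_subset (hAq q q' hqq) (fun _ => zero_le) x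
    calc ∫⁻ x, Mn n x ∂μ
        = ∑ i ∈ Finset.range n, ∫⁻ x in P i, ENNReal.ofReal (cs i + ⟪bs i, ulim' x⟫) ∂μ := key1
      _ = ∑ i ∈ Finset.range n,
          ⨆ q : ℕ, ∫⁻ x in A i q, ENNReal.ofReal (cs i + ⟪bs i, ulim' x⟫) ∂μ :=
          Finset.sum_congr rfl key2
      _ = ⨆ q : ℕ, ∑ i ∈ Finset.range n,
          ∫⁻ x in A i q, ENNReal.ofReal (cs i + ⟪bs i, ulim' x⟫) ∂μ := by
          refine ENNReal.finsetSum_iSup_of_monotone fun i q q' hqq => ?_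
          refine lintegral_mono' (Measure.restrict_mono ?_ le_rfl) le_rfl
          refine Set.inter_subset_inter_right _ fun x hx => ?_
          have h1 : 1/((q':ℝ)+1) ≤ 1/((q:ℝ)+1) := by
            apply one_div_le_one_div_of_le (by positivity)
            have : (q:ℝ) ≤ (q':ℝ) := Nat.cast_le.mpr hqq
            linarith
          exact le_trans h1 hx
      _ ≤ L := iSup_le key_q
  calc ∫⁻ x, Jeps j δ (ulim' x) ∂μ = ∫⁻ x, ⨆ n, Mn n x ∂μ :=
        lintegral_congr fun x => (hMnsup x).symm
    _ = ⨆ n, ∫⁻ x, Mn n x ∂μ := lintegral_iSup hMnmeas hMnmono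
    _ ≤ L := iSup_le key
end

section
/- Let θ > 0 and c, υ, λ ≥ 0 be real numbers, let p ∈ ℝ, let b = (b₁,b₂,b₃) ∈ ℝ³, let D and G be real 3×3 matrices, and let g ∈ ℝ³. Define the dissipative internal forces by σ^d = −p·I (I the 3×3 identity matrix), B^d = −p·(1,1,1) + c·b, H^d = υ·G, and the entropy flux Q = −(λ/θ)·g. If the mass-balance constraint b₁ + b₂ + b₃ + tr D = 0 holds, then the entropy production satisfies σ^d : D + B^d · b + H^d : G − Q · g = c·|b|² + υ·|G|² + (λ/θ)·|g|² ≥ 0, where A : B = Σ_{i,j} A_{ij}B_{ij} denotes the Frobenius product of 3×3 matrices and |·| the associated Euclidean/Frobenius norms. -/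
theorem stmt_12 (θ c υ lam : ℝ) (hθ : 0 < θ) (hc : 0 ≤ c) (hυ : 0 ≤ υ) (hlam : 0 ≤ lam)
    (p : ℝ) (b g : Fin 3 → ℝ) (D G : Matrix (Fin 3) (Fin 3) ℝ)
    (σd : Matrix (Fin 3) (Fin 3) ℝ) (Bd : Fin 3 → ℝ)
    (Hd : Matrix (Fin 3) (Fin 3) ℝ) (Q : Fin 3 → ℝ)
    (hσd : σd = -p • (1 : Matrix (Fin 3) (Fin 3) ℝ))
    (hBd : Bd = fun i => -p + c * b i)
    (hHd : Hd = υ • G)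
    (hQ : Q = fun i => -(lam / θ) * g i)
    (hmass : b 0 + b 1 + b 2 + Matrix.trace D = 0) :
    (∑ i, ∑ k, σd i k * D i k) + (∑ i, Bd i * b i) + (∑ i, ∑ k, Hd i k * G i k)
        - (∑ i, Q i * g i)
      = c * (∑ i, (b i)^2) + υ * (∑ i, ∑ k, (G i k)^2) + (lam / θ) * (∑ i, (g i)^2) ∧
    0 ≤ c * (∑ i, (b i)^2) + υ * (∑ i, ∑ k, (G i k)^2) + (lam / θ) * (∑ i, (g i)^2) := by
  subst hσd hBd hHd hQ
  rw [Matrix.trace] at hmass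
  simp only [Matrix.smul_apply, Matrix.one_apply, Matrix.diag,
    Fin.sum_univ_three, smul_eq_mul] at *
  constructor
  · norm_num [Matrix.one_apply, Fin.ext_iff]
    linear_combination (-p) * hmass
  · positivity
end
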